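/- Generalized next operator via disjunction: for worlds {1,...,n}, m < n, i with 1 ≤ i ≤ n − m, F the set of size-k subsets of {1,...,n}, and D(a, m) = {S ∈ F : S ∩ {1,...,m} = a ∩ {1,...,m}} nonempty, the two sets {S ∈ D(a,m) : ∃ j, 1 ≤ j ≤ i ∧ (m + j) ∈ S} are equal whether defined directly or by the recursive unfolding via 'next or (certainly next ...)'; consequently the fraction of S ∈ D(a,m) containing some world among m+1,...,m+i is well defined and equals 1 − C(n − m − i, k − l)/C(n − m, k − l) when k − l ≤ n − m − i, where l = |a ∩ {1,...,m}|. -/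
import Mathlib


/-- Recursive unfolding of "p happens within the next `i` steps after world `m`":
`hitsNext m (i+1) S` holds iff p holds at the next world `m+1`, or (certainly next)
p happens within the next `i` steps after world `m+1`. -/
def hitsNext : ℕ → ℕ → Finset ℕ → Bool
  | _, 0, _ => false
  | m, i + 1, S => decide ((m + 1) ∈ S) || hitsNext (m + 1) i S

lemma hitsNext_iff (i : ℕ) : ∀ (m : ℕ) (S : Finset ℕ),
    hitsNext m i S = true ↔ ∃ j ∈ Finset.Icc 1 i, (m + j) ∈ S := by
  induction i with
  | zero => intro m S; simp [hitsNext]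
  | succ i ih =>
    intro m S
    rw [hitsNext]
    simp only [Bool.or_eq_true, decide_eq_true_eq, ih, Finset.mem_Icc]
    constructor
    · rintro (h | ⟨j, hj, hjS⟩)
      · exact ⟨1, by omega, by simpa using h⟩
      · exact ⟨j + 1, by omega, by rw [show m + (j+1) = m + 1 + j by ring]; exact hjS⟩
    · rintro ⟨j, hj, hjS⟩
      rcases Nat.eq_or_lt_of_le hj.1 with h1 | h1
      · left; rwa [← h1] at hjS
      · right; exact ⟨j - 1, by omega, by rw [show m + 1 + (j - 1) = m + j by omega]; exact hjS⟩

lemma key_count (n m k : ℕ) (hmn : m ≤ n) (A B : Finset ℕ) (hA : A ⊆ Finset.Icc 1 m)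
    (hB : B ⊆ Finset.Icc (m + 1) n) (hlk : A.card ≤ k) :
    (((Finset.Icc 1 n).powersetCard k).filter
      (fun S => S ∩ Finset.Icc 1 m = A ∧ S \ Finset.Icc 1 m ⊆ B)).card
      = B.card.choose (k - A.card) := by
  rw [← Finset.card_powersetCard (k - A.card) B]
  have hABdisj : Disjoint A (Finset.Icc (m+1) n) := by
    refine Finset.disjoint_left.mpr fun x hx hx' => ?_
    have := hA hx; simp only [Finset.mem_Icc] at this hx'; omega
  apply Finset.card_bij' (fun S _ => S \ Finset.Icc 1 m) (fun T _ => A ∪ T)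
  · intro S hS
    simp only [Finset.mem_filter, Finset.mem_powersetCard] at hS
    obtain ⟨⟨hSsub, hScard⟩, hSA, hSB⟩ := hS
    simp only [Finset.mem_powersetCard]
    refine ⟨hSB, ?_⟩
    have h2 := Finset.card_sdiff_add_card_inter S (Finset.Icc 1 m)
    rw [hSA] at h2; omega
  · intro T hT
    simp only [Finset.mem_powersetCard] at hT
    obtain ⟨hTB, hTcard⟩ := hT
    have hTsub : T ⊆ Finset.Icc (m+1) n := hTB.trans hB
    have hdisj : Disjoint A T := hABdisj.mono_right hTsub
    have hTm : Disjoint T (Finset.Icc 1 m) := by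
      refine Finset.disjoint_left.mpr fun x hx hx' => ?_
      have := hTsub hx; simp only [Finset.mem_Icc] at this hx'; omega
    simp only [Finset.mem_filter, Finset.mem_powersetCard]
    refine ⟨⟨?_, ?_⟩, ?_, ?_⟩
    · apply Finset.union_subset
      · exact hA.trans (Finset.Icc_subset_Icc_right (by omega))
      · exact hTsub.trans (Finset.Icc_subset_Icc_left (by omega))
    · rw [Finset.card_union_of_disjoint hdisj, hTcard]; omega
    · rw [Finset.union_inter_distrib_right, Finset.inter_eq_left.mpr hA,
        (Finset.disjoint_iff_inter_eq_empty.mp hTm), Finset.union_empty]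
    · rw [Finset.union_sdiff_distrib, Finset.sdiff_eq_empty_iff_subset.mpr hA,
        Finset.empty_union]
      exact (Finset.sdiff_subset).trans hTB
  · intro S hS
    simp only [Finset.mem_filter] at hS
    rw [← hS.2.1, Finset.union_comm, Finset.sdiff_union_inter]
  · intro T hT
    simp only [Finset.mem_powersetCard] at hT
    have hTm : Disjoint T (Finset.Icc 1 m) := by
      refine Finset.disjoint_left.mpr fun x hx hx' => ?_
      have := (hT.1.trans hB) hx; simp only [Finset.mem_Icc] at this hx'; omega
    rw [Finset.union_sdiff_distrib, Finset.sdiff_eq_empty_iff_subset.mpr hA,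
      Finset.empty_union, Finset.sdiff_eq_self_of_disjoint hTm]

theorem stmt_9 (n k m l i : ℕ) (hmn : m < n) (hkn : k ≤ n)
    (hi1 : 1 ≤ i) (hi : i ≤ n - m)
    (a : Finset ℕ) (ha : a ⊆ Finset.Icc 1 n)
    (hl : l = (a ∩ Finset.Icc 1 m).card)
    (hD : (((Finset.Icc 1 n).powersetCard k).filter
        (fun S => S ∩ Finset.Icc 1 m = a ∩ Finset.Icc 1 m)).Nonempty)
    (hrem : k - l ≤ n - m - i) :
    (((((Finset.Icc 1 n).powersetCard k).filter
        (fun S => S ∩ Finset.Icc 1 m = a ∩ Finset.Icc 1 m)).filter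
        (fun S => ∃ j ∈ Finset.Icc 1 i, (m + j) ∈ S))
      = ((((Finset.Icc 1 n).powersetCard k).filter
        (fun S => S ∩ Finset.Icc 1 m = a ∩ Finset.Icc 1 m)).filter
        (fun S => hitsNext m i S = true))) ∧
    ((((((Finset.Icc 1 n).powersetCard k).filter
        (fun S => S ∩ Finset.Icc 1 m = a ∩ Finset.Icc 1 m)).filter
        (fun S => ∃ j ∈ Finset.Icc 1 i, (m + j) ∈ S)).card : ℚ)
      / ((((Finset.Icc 1 n).powersetCard k).filter
        (fun S => S ∩ Finset.Icc 1 m = a ∩ Finset.Icc 1 m)).card : ℚ)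
      = 1 - (Nat.choose (n - m - i) (k - l) : ℚ) / (Nat.choose (n - m) (k - l) : ℚ)) := by
  set A := a ∩ Finset.Icc 1 m with hAdef
  set D := ((Finset.Icc 1 n).powersetCard k).filter
      (fun S => S ∩ Finset.Icc 1 m = A) with hDdef
  have hAsub : A ⊆ Finset.Icc 1 m := Finset.inter_subset_right
  have hlk : l ≤ k := by
    obtain ⟨S, hS⟩ := hD
    rw [hDdef] at hS
    simp only [Finset.mem_filter, Finset.mem_powersetCard] at hS
    have : A ⊆ S := by rw [← hS.2]; exact Finset.inter_subset_left
    have := Finset.card_le_card this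
    omega
  constructor
  · apply Finset.filter_congr
    intro S _
    exact (hitsNext_iff i m S).symm
  · -- counting part
    have hDcard : D.card = (n - m).choose (k - l) := by
      have hkey := key_count n m k hmn.le A (Finset.Icc (m+1) n) hAsub subset_rfl
        (by omega)
      rw [Nat.card_Icc, show n + 1 - (m + 1) = n - m by omega, ← hl] at hkey
      rw [← hkey]
      congr 1
      ext S
      simp only [Finset.mem_filter, Finset.mem_powersetCard, hDdef]
      constructor
      · rintro ⟨⟨h1, h2⟩, h3⟩
        refine ⟨⟨h1, h2⟩, h3, fun x hx => ?_⟩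
        simp only [Finset.mem_sdiff, Finset.mem_Icc] at hx
        have := h1 hx.1
        simp only [Finset.mem_Icc] at this ⊢
        omega
      · rintro ⟨⟨h1, h2⟩, h3, _⟩
        exact ⟨⟨h1, h2⟩, h3⟩
    set Av := D.filter (fun S => ¬ ∃ j ∈ Finset.Icc 1 i, (m + j) ∈ S) with hAvdef
    have hAvcard : Av.card = (n - m - i).choose (k - l) := by
      have hkey := key_count n m k hmn.le A (Finset.Icc (m+i+1) n) hAsub
        (Finset.Icc_subset_Icc_left (by omega)) (by omega)
      rw [Nat.card_Icc, show n + 1 - (m + i + 1) = n - m - i by omega, ← hl] at hkey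
      rw [← hkey]
      congr 1
      ext S
      simp only [hAvdef, hDdef, Finset.mem_filter, Finset.mem_powersetCard]
      constructor
      · rintro ⟨⟨⟨h1, h2⟩, h3⟩, h4⟩
        refine ⟨⟨h1, h2⟩, h3, fun x hx => ?_⟩
        rw [Finset.mem_sdiff, Finset.mem_Icc] at hx
        have hx1 := h1 hx.1
        rw [Finset.mem_Icc] at hx1
        rcases Nat.lt_or_ge x (m + i + 1) with hlt | hge
        · exfalso
          apply h4
          refine ⟨x - m, ?_, ?_⟩
          · rw [Finset.mem_Icc]; omega
          · rw [show m + (x - m) = x by omega]; exact hx.1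
        · rw [Finset.mem_Icc]; omega
      · rintro ⟨⟨h1, h2⟩, h3, h4⟩
        refine ⟨⟨⟨h1, h2⟩, h3⟩, ?_⟩
        rintro ⟨j, hj, hjS⟩
        rw [Finset.mem_Icc] at hj
        have hmem : m + j ∈ S \ Finset.Icc 1 m := by
          rw [Finset.mem_sdiff, Finset.mem_Icc]
          exact ⟨hjS, by omega⟩
        have hge := h4 hmem
        rw [Finset.mem_Icc] at hge
        omega
    have hsplit : (D.filter (fun S => ∃ j ∈ Finset.Icc 1 i, (m + j) ∈ S)).card
        + Av.card = D.card :=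
      Finset.card_filter_add_card_filter_not _
    have hAvle : Av.card ≤ D.card := Finset.card_le_card (Finset.filter_subset _ _)
    have hchle : k - l ≤ n - m := by omega
    have hpos : 0 < (n - m).choose (k - l) := Nat.choose_pos hchle
    have hHit : (D.filter (fun S => ∃ j ∈ Finset.Icc 1 i, (m + j) ∈ S)).card
        = D.card - Av.card := by omega
    rw [hHit, Nat.cast_sub hAvle, hDcard, hAvcard]
    have hne : ((n - m).choose (k - l) : ℚ) ≠ 0 := by positivity
    field_simp
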